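/- For α ≠ 0 let μ(t) = 2αe^{αt}/(e^{αt}−1) and β(t) = (e^{αt}−1)/(2α). Then for all φ ≥ 0 and t > 0, exp(−αφe^{αt}/(α + ((e^{αt}−1)/2)φ)) = e^{−μ(t)} · exp(μ(t)/(1 + β(t)φ)) = Σ_{ℓ=0}^∞ e^{−μ(t)} (μ(t)^ℓ/ℓ!) (1 + β(t)φ)^{−ℓ}. -/

import Mathlib

open Real

/-- Feller's Poisson-mixture representation of the Laplace transform: for `α ≠ 0`,
`μ(t) = 2αe^{αt}/(e^{αt}−1)`, `β(t) = (e^{αt}−1)/(2α)`, and all `φ ≥ 0`, `t > 0`,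
`exp(−αφe^{αt}/(α + ((e^{αt}−1)/2)φ)) = e^{−μ(t)} exp(μ(t)/(1+β(t)φ))
  = Σ_{ℓ=0}^∞ e^{−μ(t)} (μ(t)^ℓ/ℓ!) (1+β(t)φ)^{−ℓ}`. -/
theorem feller_poisson_mixture (α : ℝ) (hα : α ≠ 0) (μ β : ℝ → ℝ)
    (hμ : ∀ t : ℝ, μ t = 2 * α * Real.exp (α * t) / (Real.exp (α * t) - 1))
    (hβ : ∀ t : ℝ, β t = (Real.exp (α * t) - 1) / (2 * α)) :
    ∀ φ t : ℝ, 0 ≤ φ → 0 < t →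
      Real.exp (-(α * φ * Real.exp (α * t)) / (α + (Real.exp (α * t) - 1) / 2 * φ))
        = Real.exp (-(μ t)) * Real.exp (μ t / (1 + β t * φ))
      ∧ Real.exp (-(α * φ * Real.exp (α * t)) / (α + (Real.exp (α * t) - 1) / 2 * φ))
        = ∑' ℓ : ℕ, Real.exp (-(μ t)) * (μ t) ^ ℓ / (Nat.factorial ℓ) *
            (1 + β t * φ) ^ (-(ℓ : ℝ)) := by
  intro φ t hφ ht
  set E := Real.exp (α * t) with hE
  have hαE : 0 < α * (E - 1) := by
    rcases lt_or_gt_of_ne hα with h | h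
    · have h1 : E < 1 := by rw [hE]; exact Real.exp_lt_one_iff.mpr (mul_neg_of_neg_of_pos h ht)
      nlinarith
    · have h1 : 1 < E := by rw [hE]; exact Real.one_lt_exp_iff.mpr (mul_pos h ht)
      nlinarith
  have hE1 : E - 1 ≠ 0 := by
    intro h; rw [h, mul_zero] at hαE; exact lt_irrefl 0 hαE
  have hα2 : 0 < α * α := mul_self_pos.mpr hα
  have hD : α * (α + (E - 1) / 2 * φ) > 0 := by nlinarith [mul_nonneg hαE.le hφ]
  have hDne : α + (E - 1) / 2 * φ ≠ 0 := by
    intro h; rw [h, mul_zero] at hD; exact lt_irrefl 0 hD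
  have hβpos : 0 < 1 + β t * φ := by
    rw [hβ]
    have : (E - 1) / (2 * α) * φ ≥ 0 := by
      apply mul_nonneg _ hφ
      apply le_of_lt
      rw [div_pos_iff]
      rcases lt_or_gt_of_ne hα with h | h
      · right; constructor <;> nlinarith
      · left; constructor <;> nlinarith
    linarith
  have hβne : 1 + β t * φ ≠ 0 := ne_of_gt hβpos
  have hD2 : 0 < α * (2 * α + (E - 1) * φ) := by nlinarith [mul_nonneg hαE.le hφ]
  have h3 : 2 * α + (E - 1) * φ ≠ 0 := by
    intro h; rw [h, mul_zero] at hD2; exact lt_irrefl 0 hD2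
  have h3' : α * 2 - φ + φ * E ≠ 0 := by intro h; apply h3; linarith
  have e1 : 1 + β t * φ = (2 * α + (E - 1) * φ) / (2 * α) := by
    rw [hβ, ← hE]; field_simp
  have key : -(α * φ * E) / (α + (E - 1) / 2 * φ) = -(μ t) + μ t / (1 + β t * φ) := by
    rw [div_eq_iff hDne, hμ, e1, ← hE, div_div_eq_mul_div]
    field_simp
    have h4 : α * 2 + φ * (E - 1) ≠ 0 := by intro h; apply h3; linarith
    rw [add_div' _ _ _ h4, mul_div_assoc', eq_div_iff h4]
    ring
  have first : Real.exp (-(α * φ * E) / (α + (E - 1) / 2 * φ))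
      = Real.exp (-(μ t)) * Real.exp (μ t / (1 + β t * φ)) := by
    rw [← Real.exp_add, key]
  refine ⟨first, ?_⟩
  rw [first]
  have hterm : ∀ ℓ : ℕ, Real.exp (-(μ t)) * (μ t) ^ ℓ / (Nat.factorial ℓ) *
      (1 + β t * φ) ^ (-(ℓ : ℝ))
      = Real.exp (-(μ t)) * ((μ t / (1 + β t * φ)) ^ ℓ / (Nat.factorial ℓ)) := by
    intro ℓ
    rw [Real.rpow_neg (le_of_lt hβpos), Real.rpow_natCast, div_pow]
    ring
  rw [tsum_congr hterm, tsum_mul_left]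
  congr 1
  rw [Real.exp_eq_exp_ℝ, NormedSpace.exp_eq_tsum_div]
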